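/- Let (X,g) be a compact Riemannian manifold (or the regular part of a compact stratified space with suitable cut-off functions) and φ an eigenfunction of the Laplacian with Δφ = λφ, φ smooth on an open dense set X^reg, |∇φ| ∈ L^∞, and suppose Ric ≥ K on X^reg and there exist cut-offs ρ_ε ∈ C_c^∞(X^reg) with 0 ≤ ρ_ε ≤ 1, ‖∇ρ_ε‖_{L²} → 0, ‖Δρ_ε‖_{L¹} → 0, ρ_ε → 1 pointwise. Then for every nonnegative ψ with ψ, Δψ ∈ L^∞, the integrated Bochner inequality holds: −(1/2)∫ Δψ |dφ|² + ∫ ψ ⟨∇Δφ, ∇φ⟩ ≥ ∫ ψ (K|dφ|² + (Δφ)²/n). -/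

import Mathlib

open MeasureTheory Filter

/-- integrated Bochner inequality for an eigenfunction `φ` (`Δφ = λφ`)
on (the regular set `Xreg` of) a compact stratified space with `Ric ≥ K` and suitable
cut-off functions.  Here `e = |dφ|²` (bounded), `Δe` its pointwise Laplacian on
`Xreg`, `q = ⟨∇Δφ, ∇φ⟩ = λ e`, `h = (Δφ)²`, and `ψ ≥ 0` a test function with `ψ, Δψ`
bounded and `|∇ψ| ∈ L²`.  The pointwise Bochner formula combined with `Ric ≥ K` and
Cauchy–Schwarz gives `-(1/2)Δe + λ e ≥ K e + h/n` on `Xreg`; the cut-offs `ρ_ε`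
satisfy `0 ≤ ρ_ε ≤ 1`, supported in `Xreg`, `‖∇ρ_ε‖_{L²} → 0`, `‖Δρ_ε‖_{L¹} → 0`,
`ρ_ε → 1` on `Xreg`, together with the integration by parts identity.  Conclusion:
`-(1/2)∫ Δψ |dφ|² + ∫ ψ ⟨∇Δφ,∇φ⟩ ≥ ∫ ψ (K |dφ|² + (Δφ)²/n)`. -/
theorem integrated_bochner_inequality
    {X : Type*} [MeasurableSpace X] (μ : Measure X) [IsFiniteMeasure μ]
    (Xreg : Set X) (hXreg : MeasurableSet Xreg) (hfull : μ Xregᶜ = 0)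
    (n : ℕ) (hn : 1 ≤ n) (K lam : ℝ)
    (e Δe q h ψ Δψf gψ : X → ℝ)
    (he : ∀ x, 0 ≤ e x) (hebd : ∃ M, ∀ x, e x ≤ M)
    (hh : ∀ x, 0 ≤ h x)
    (hq : ∀ x, q x = lam * e x)
    (hψpos : ∀ x, 0 ≤ ψ x) (hψbd : ∃ M, ∀ x, ψ x ≤ M ∧ |Δψf x| ≤ M)
    (hgψ : Integrable (fun x => gψ x ^ 2) μ) (hgψpos : ∀ x, 0 ≤ gψ x)
    -- pointwise Bochner formula + `Ric ≥ K` + Cauchy–Schwarz on the regular set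
    (hBochner : ∀ x ∈ Xreg, K * e x + h x / n ≤ -(1 / 2) * Δe x + lam * e x)
    -- the cut-off family and the integration by parts identity
    (ρ gρ Δρ : ℝ → X → ℝ) (cross : ℝ → X → ℝ)
    (hρ01 : ∀ ε > (0:ℝ), ∀ x, 0 ≤ ρ ε x ∧ ρ ε x ≤ 1)
    (hρsupp : ∀ ε > (0:ℝ), ∀ x ∉ Xreg, ρ ε x = 0)
    (hgρ : Tendsto (fun ε => ∫ x, (gρ ε x) ^ 2 ∂μ) (nhdsWithin 0 (Set.Ioi 0)) (nhds 0))
    (hΔρ : Tendsto (fun ε => ∫ x, |Δρ ε x| ∂μ) (nhdsWithin 0 (Set.Ioi 0)) (nhds 0))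
    (hρ1 : ∀ x ∈ Xreg, Tendsto (fun ε => ρ ε x) (nhdsWithin 0 (Set.Ioi 0)) (nhds 1))
    (hcross : ∀ ε > (0:ℝ), ∀ x, |cross ε x| ≤ gψ x * gρ ε x)
    (hIBP : ∀ ε > (0:ℝ),
      ∫ x, ρ ε x * ψ x * Δe x ∂μ =
        (∫ x, ρ ε x * Δψf x * e x ∂μ) + (∫ x, ψ x * Δρ ε x * e x ∂μ) -
          2 * ∫ x, cross ε x * e x ∂μ)
    -- integrability of all the integrands involved
    (hint : Integrable (fun x => Δψf x * e x) μ ∧ Integrable (fun x => ψ x * e x) μ ∧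
      Integrable (fun x => ψ x * h x) μ ∧
      ∀ ε > (0:ℝ), Integrable (fun x => ρ ε x * ψ x * Δe x) μ ∧
        Integrable (fun x => ρ ε x * Δψf x * e x) μ ∧
        Integrable (fun x => ψ x * Δρ ε x * e x) μ ∧
        Integrable (fun x => cross ε x * e x) μ ∧
        Integrable (fun x => gρ ε x ^ 2) μ ∧ Integrable (fun x => |Δρ ε x|) μ) :
    -(1 / 2) * (∫ x, Δψf x * e x ∂μ) + (∫ x, ψ x * q x ∂μ) ≥
      ∫ x, (K * (ψ x * e x) + ψ x * h x / n) ∂μ := by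
  classical
  obtain ⟨hintΔψe, hintψe, hintψh, hintε⟩ := hint
  rcases isEmpty_or_nonempty X with hX | hX
  · simp [integral_of_isEmpty]
  obtain ⟨x₀⟩ := hX
  obtain ⟨Me, hMe⟩ := hebd
  obtain ⟨Mψ, hMψ⟩ := hψbd
  have hMe0 : 0 ≤ Me := le_trans (he x₀) (hMe x₀)
  have hMψ0 : 0 ≤ Mψ := le_trans (hψpos x₀) (hMψ x₀).1
  have hmem : ∀ᵐ x ∂μ, x ∈ Xreg := by
    rw [ae_iff]
    exact hfull
  set l : Filter ℝ := nhdsWithin 0 (Set.Ioi 0) with hl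
  have hev : ∀ᶠ ε in l, ε ∈ Set.Ioi (0:ℝ) := eventually_mem_nhdsWithin
  -- the integrable "limit" integrand
  set L : X → ℝ := fun x => (K * (ψ x * e x) + ψ x * h x / n) - lam * (ψ x * e x) with hLdef
  have hintGoal : Integrable (fun x => K * (ψ x * e x) + ψ x * h x / n) μ :=
    (hintψe.const_mul K).add (hintψh.div_const n)
  have hintL : Integrable L μ := hintGoal.sub (hintψe.const_mul lam)
  -- abbreviation for the cut-off integrand
  set W : ℝ → X → ℝ := fun ε x => ρ ε x * ψ x * Δe x with hWdef
  -- pointwise key inequality on Xreg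
  have hkey : ∀ ε > (0:ℝ), ∀ x ∈ Xreg, ρ ε x * L x + (1/2) * W ε x ≤ 0 := by
    intro ε hε x hx
    have hb := hBochner x hx
    have hρx := hρ01 ε hε x
    have hψx := hψpos x
    have hprod : (ρ ε x * ψ x) * (K * e x + h x / n - lam * e x + (1/2) * Δe x) ≤ 0 :=
      mul_nonpos_of_nonneg_of_nonpos (mul_nonneg hρx.1 hψx) (by linarith)
    have heq : ρ ε x * L x + (1/2) * W ε x =
        (ρ ε x * ψ x) * (K * e x + h x / n - lam * e x + (1/2) * Δe x) := by
      simp only [hLdef, hWdef]; ring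
    linarith [heq ▸ hprod]
  -- pointwise bound : L + (1/2) W ≤ |L| on Xreg
  have hbd : ∀ ε > (0:ℝ), ∀ x ∈ Xreg, L x + (1/2) * W ε x ≤ |L x| := by
    intro ε hε x hx
    have hk := hkey ε hε x hx
    have hρx := hρ01 ε hε x
    have h1 : (1 - ρ ε x) * L x ≤ (1 - ρ ε x) * |L x| :=
      mul_le_mul_of_nonneg_left (le_abs_self _) (by linarith [hρx.2])
    have h2 : (1 - ρ ε x) * |L x| ≤ 1 * |L x| :=
      mul_le_mul_of_nonneg_right (by linarith [hρx.1]) (abs_nonneg _)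
    calc L x + (1/2) * W ε x
        = (1 - ρ ε x) * L x + (ρ ε x * L x + (1/2) * W ε x) := by ring
      _ ≤ (1 - ρ ε x) * L x + 0 := by linarith
      _ = (1 - ρ ε x) * L x := by ring
      _ ≤ (1 - ρ ε x) * |L x| := h1
      _ ≤ 1 * |L x| := h2
      _ = |L x| := one_mul _
  -- the error term D ε
  set D : ℝ → ℝ := fun ε => ∫ x, max (L x + (1/2) * W ε x) 0 ∂μ with hDdef
  have hWint : ∀ ε > (0:ℝ), Integrable (W ε) μ := fun ε hε => (hintε ε hε).1
  have hmaxmeas : ∀ ε > (0:ℝ),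
      AEStronglyMeasurable (fun x => max (L x + (1/2) * W ε x) 0) μ := by
    intro ε hε
    have hA : AEStronglyMeasurable (fun x => L x + (1/2) * W ε x) μ :=
      hintL.aestronglyMeasurable.add (((hWint ε hε).aestronglyMeasurable).const_mul _)
    have hs := hA.sup (aestronglyMeasurable_const (b := (0:ℝ)))
    simpa [Pi.sup_def] using hs
  have hmaxbd : ∀ ε > (0:ℝ), ∀ᵐ x ∂μ, ‖max (L x + (1/2) * W ε x) 0‖ ≤ |L x| := by
    intro ε hε
    filter_upwards [hmem] with x hx
    rw [Real.norm_eq_abs, abs_of_nonneg (le_max_right _ _)]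
    exact max_le (hbd ε hε x hx) (abs_nonneg _)
  have hmaxint : ∀ ε > (0:ℝ), Integrable (fun x => max (L x + (1/2) * W ε x) 0) μ := by
    intro ε hε
    exact Integrable.mono hintL.abs (hmaxmeas ε hε) (by simpa using hmaxbd ε hε)
  -- D ε → 0
  have hD0 : Tendsto D l (nhds 0) := by
    have := MeasureTheory.tendsto_integral_filter_of_dominated_convergence
      (μ := μ) (l := l) (F := fun ε x => max (L x + (1/2) * W ε x) 0)
      (f := fun _ => (0:ℝ)) (bound := fun x => |L x|)
      (hev.mono fun ε hε => hmaxmeas ε hε)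
      (hev.mono fun ε hε => hmaxbd ε hε)
      hintL.abs ?_
    · simpa only [integral_zero] using this
    · filter_upwards [hmem] with x hx
      have hρt := hρ1 x hx
      have hW : Tendsto (fun ε => L x + (1/2) * W ε x) l
          (nhds (L x + (1/2) * (ψ x * Δe x))) := by
        have : Tendsto (fun ε => ρ ε x * (ψ x * Δe x)) l (nhds (1 * (ψ x * Δe x))) :=
          hρt.mul_const _
        have h2 : Tendsto (fun ε => L x + (1/2) * (ρ ε x * (ψ x * Δe x))) l
            (nhds (L x + (1/2) * (1 * (ψ x * Δe x)))) :=
          (tendsto_const_nhds.add (this.const_mul _))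
        simpa [hWdef, mul_assoc, mul_comm, mul_left_comm] using h2
      have hneg : L x + (1/2) * (ψ x * Δe x) ≤ 0 := by
        have hb := hBochner x hx
        have hψx := hψpos x
        have hprod : ψ x * (K * e x + h x / n - lam * e x + (1/2) * Δe x) ≤ 0 :=
          mul_nonpos_of_nonneg_of_nonpos hψx (by linarith)
        have heq : K * (ψ x * e x) + ψ x * h x / (n:ℝ) - lam * (ψ x * e x)
            + (1/2) * (ψ x * Δe x)
            = ψ x * (K * e x + h x / n - lam * e x + (1/2) * Δe x) := by ring
        have hLx : L x = K * (ψ x * e x) + ψ x * h x / (n:ℝ) - lam * (ψ x * e x) := rfl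
        rw [hLx]
        linarith [hprod, heq]
      have := hW.max (tendsto_const_nhds (x := (0:ℝ)))
      rwa [max_eq_right hneg] at this
  -- the per-ε integral inequality
  have hle : ∀ ε > (0:ℝ), (∫ x, L x ∂μ) + (1/2) * (∫ x, W ε x ∂μ) ≤ D ε := by
    intro ε hε
    have h1 : ∫ x, (L x + (1/2) * W ε x) ∂μ ≤ D ε :=
      integral_mono (hintL.add ((hWint ε hε).const_mul _)) (hmaxint ε hε)
        (fun x => le_max_left _ _)
    rwa [integral_add hintL ((hWint ε hε).const_mul _), integral_const_mul] at h1
  -- limits of the three IBP terms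
  have hA : Tendsto (fun ε => ∫ x, ρ ε x * Δψf x * e x ∂μ) l
      (nhds (∫ x, Δψf x * e x ∂μ)) := by
    apply MeasureTheory.tendsto_integral_filter_of_dominated_convergence
      (bound := fun _ => Mψ * Me)
    · exact hev.mono fun ε hε => ((hintε ε hε).2.1).aestronglyMeasurable
    · refine hev.mono fun ε hε => ae_of_all _ fun x => ?_
      have hρx := hρ01 ε hε x
      have h1 : |ρ ε x * Δψf x * e x| = ρ ε x * |Δψf x| * e x := by
        rw [abs_mul, abs_mul, abs_of_nonneg hρx.1, abs_of_nonneg (he x)]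
      rw [Real.norm_eq_abs, h1]
      calc ρ ε x * |Δψf x| * e x ≤ 1 * |Δψf x| * e x := by
            apply mul_le_mul_of_nonneg_right _ (he x)
            exact mul_le_mul_of_nonneg_right hρx.2 (abs_nonneg _)
        _ = |Δψf x| * e x := by ring
        _ ≤ Mψ * Me := by
            apply mul_le_mul (hMψ x).2 (hMe x) (he x) hMψ0
    · exact integrable_const _
    · filter_upwards [hmem] with x hx
      have : Tendsto (fun ε => ρ ε x * (Δψf x * e x)) l (nhds (1 * (Δψf x * e x))) :=
        (hρ1 x hx).mul_const _
      simpa [mul_assoc] using this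
  have hB : Tendsto (fun ε => ∫ x, ψ x * Δρ ε x * e x ∂μ) l (nhds 0) := by
    apply squeeze_zero_norm' (a := fun ε => Mψ * Me * ∫ x, |Δρ ε x| ∂μ)
    · refine hev.mono fun ε hε => ?_
      have hint1 := (hintε ε hε).2.2.1
      have hint2 := (hintε ε hε).2.2.2.2.2
      calc ‖∫ x, ψ x * Δρ ε x * e x ∂μ‖ ≤ ∫ x, |ψ x * Δρ ε x * e x| ∂μ := by
            simpa only [Real.norm_eq_abs] using
              norm_integral_le_integral_norm (μ := μ) (fun x => ψ x * Δρ ε x * e x)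
        _ ≤ ∫ x, Mψ * Me * |Δρ ε x| ∂μ := by
            apply integral_mono hint1.abs (hint2.const_mul _)
            intro x
            show |ψ x * Δρ ε x * e x| ≤ Mψ * Me * |Δρ ε x|
            have h1 : |ψ x * Δρ ε x * e x| = ψ x * |Δρ ε x| * e x := by
              rw [abs_mul, abs_mul, abs_of_nonneg (hψpos x), abs_of_nonneg (he x)]
            rw [h1]
            calc ψ x * |Δρ ε x| * e x ≤ Mψ * |Δρ ε x| * Me := by
                  apply mul_le_mul _ (hMe x) (he x)
                  · exact mul_nonneg hMψ0 (abs_nonneg _)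
                  · exact mul_le_mul_of_nonneg_right (hMψ x).1 (abs_nonneg _)
              _ = Mψ * Me * |Δρ ε x| := by ring
        _ = Mψ * Me * ∫ x, |Δρ ε x| ∂μ := integral_const_mul _ _
    · simpa using hΔρ.const_mul (Mψ * Me)
  -- measurability of gψ
  have hgψmeas : AEStronglyMeasurable gψ μ := by
    have : AEStronglyMeasurable (fun x => Real.sqrt (gψ x ^ 2)) μ :=
      Real.continuous_sqrt.comp_aestronglyMeasurable hgψ.aestronglyMeasurable
    exact this.congr (ae_of_all _ fun x => Real.sqrt_sq (hgψpos x))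
  have hgψL2 : MemLp gψ 2 μ := (memLp_two_iff_integrable_sq hgψmeas).2 hgψ
  have hC : Tendsto (fun ε => ∫ x, cross ε x * e x ∂μ) l (nhds 0) := by
    apply squeeze_zero_norm'
      (a := fun ε => Me * ((∫ x, gψ x ^ 2 ∂μ) ^ (1/2:ℝ) * (∫ x, gρ ε x ^ 2 ∂μ) ^ (1/2:ℝ)))
    · refine hev.mono fun ε hε => ?_
      have hintc := (hintε ε hε).2.2.2.1
      have hintgρ := (hintε ε hε).2.2.2.2.1
      set aρ : X → ℝ := fun x => |gρ ε x| with haρ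
      have haρpos : ∀ x, 0 ≤ aρ x := fun x => abs_nonneg _
      have haρsq : ∀ x, aρ x ^ 2 = gρ ε x ^ 2 := fun x => sq_abs _
      have haρmeas : AEStronglyMeasurable aρ μ := by
        have h1 : AEStronglyMeasurable (fun x => Real.sqrt (gρ ε x ^ 2)) μ :=
          Real.continuous_sqrt.comp_aestronglyMeasurable hintgρ.aestronglyMeasurable
        exact h1.congr (ae_of_all _ fun x => Real.sqrt_sq_eq_abs _)
      have hintaρ : Integrable (fun x => aρ x ^ 2) μ := by
        refine hintgρ.congr (ae_of_all _ fun x => ?_)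
        simp [haρ, sq_abs]
      have haρL2 : MemLp aρ 2 μ := (memLp_two_iff_integrable_sq haρmeas).2 hintaρ
      have hcross' : ∀ x, |cross ε x| ≤ gψ x * aρ x := fun x =>
        le_trans (hcross ε hε x) (mul_le_mul_of_nonneg_left (le_abs_self _) (hgψpos x))
      have hintprod : Integrable (fun x => gψ x * aρ x) μ := by
        apply Integrable.mono ((hgψ.add hintaρ).div_const 2) (hgψmeas.mul haρmeas)
        refine ae_of_all _ fun x => ?_
        show ‖gψ x * aρ x‖ ≤ ‖(gψ x ^ 2 + aρ x ^ 2) / 2‖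
        rw [Real.norm_eq_abs, Real.norm_eq_abs,
          abs_of_nonneg (mul_nonneg (hgψpos x) (haρpos x)),
          abs_of_nonneg (by positivity : (0:ℝ) ≤ (gψ x ^ 2 + aρ x ^ 2) / 2)]
        nlinarith [sq_nonneg (gψ x - aρ x)]
      have hholder : ∫ x, gψ x * aρ x ∂μ ≤
          (∫ x, gψ x ^ (2:ℝ) ∂μ) ^ (1/(2:ℝ)) * (∫ x, aρ x ^ (2:ℝ) ∂μ) ^ (1/(2:ℝ)) := by
        apply MeasureTheory.integral_mul_le_Lp_mul_Lq_of_nonneg ⟨by norm_num, by norm_num, by norm_num⟩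
          (ae_of_all _ hgψpos) (ae_of_all _ haρpos)
        · rwa [show ENNReal.ofReal (2:ℝ) = 2 by norm_num]
        · rwa [show ENNReal.ofReal (2:ℝ) = 2 by norm_num]
      have hrw : ∀ u : X → ℝ, (fun x => u x ^ (2:ℝ)) = fun x => u x ^ (2:ℕ) := by
        intro u; funext x
        rw [show ((2:ℝ)) = ((2:ℕ):ℝ) by norm_num, Real.rpow_natCast]
      rw [hrw gψ, hrw aρ] at hholder
      have hsqeq : ∫ x, aρ x ^ 2 ∂μ = ∫ x, gρ ε x ^ 2 ∂μ :=
        integral_congr_ae (ae_of_all _ fun x => haρsq x)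
      rw [hsqeq] at hholder
      calc ‖∫ x, cross ε x * e x ∂μ‖ ≤ ∫ x, |cross ε x * e x| ∂μ := by
            simpa only [Real.norm_eq_abs] using
              norm_integral_le_integral_norm (μ := μ) (fun x => cross ε x * e x)
        _ ≤ ∫ x, Me * (gψ x * aρ x) ∂μ := by
            apply integral_mono hintc.abs (hintprod.const_mul _)
            intro x
            show |cross ε x * e x| ≤ Me * (gψ x * aρ x)
            have h1 : |cross ε x * e x| = |cross ε x| * e x := by
              rw [abs_mul, abs_of_nonneg (he x)]
            rw [h1]
            calc |cross ε x| * e x ≤ (gψ x * aρ x) * Me := by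
                  apply mul_le_mul (hcross' x) (hMe x) (he x)
                  exact mul_nonneg (hgψpos x) (haρpos x)
              _ = Me * (gψ x * aρ x) := by ring
        _ = Me * ∫ x, gψ x * aρ x ∂μ := integral_const_mul _ _
        _ ≤ Me * ((∫ x, gψ x ^ 2 ∂μ) ^ (1/2:ℝ) * (∫ x, gρ ε x ^ 2 ∂μ) ^ (1/2:ℝ)) :=
            mul_le_mul_of_nonneg_left hholder hMe0
    · have hsq : Tendsto (fun ε => (∫ x, gρ ε x ^ 2 ∂μ) ^ (1/2:ℝ)) l (nhds 0) := by
        have hc : ContinuousAt (fun t : ℝ => t ^ (1/2:ℝ)) 0 :=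
          Real.continuousAt_rpow_const 0 (1/2) (Or.inr (by norm_num))
        have := hc.tendsto.comp hgρ
        simpa [Function.comp_def, Real.zero_rpow (by norm_num : (1/2:ℝ) ≠ 0)] using this
      have h2 := ((tendsto_const_nhds
        (x := (∫ x, gψ x ^ 2 ∂μ) ^ (1/2:ℝ))).mul hsq).const_mul Me
      simpa using h2
  -- combine: ∫ L ≤ -(1/2) ∫ Δψ e
  have hWlim : Tendsto (fun ε => D ε - (1/2) * ((∫ x, ρ ε x * Δψf x * e x ∂μ) +
      (∫ x, ψ x * Δρ ε x * e x ∂μ) - 2 * ∫ x, cross ε x * e x ∂μ)) l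
      (nhds (0 - (1/2) * ((∫ x, Δψf x * e x ∂μ) + 0 - 2 * 0))) :=
    hD0.sub (((hA.add hB).sub (hC.const_mul 2)).const_mul _)
  have hfinal : (∫ x, L x ∂μ) ≤ -(1/2) * (∫ x, Δψf x * e x ∂μ) := by
    have hev2 : ∀ᶠ ε in l, (∫ x, L x ∂μ) ≤ D ε - (1/2) * ((∫ x, ρ ε x * Δψf x * e x ∂μ) +
        (∫ x, ψ x * Δρ ε x * e x ∂μ) - 2 * ∫ x, cross ε x * e x ∂μ) := by
      refine hev.mono fun ε hε => ?_
      have := hle ε hε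
      rw [hIBP ε hε] at this
      linarith
    have := ge_of_tendsto hWlim hev2
    linarith [this]
  -- rewrite the integrals and conclude
  have hLsplit : ∫ x, L x ∂μ =
      (∫ x, (K * (ψ x * e x) + ψ x * h x / n) ∂μ) - lam * ∫ x, ψ x * e x ∂μ := by
    rw [hLdef]
    rw [integral_sub hintGoal (hintψe.const_mul lam), integral_const_mul]
  have hq' : (∫ x, ψ x * q x ∂μ) = lam * ∫ x, ψ x * e x ∂μ := by
    rw [← integral_const_mul]
    congr 1
    funext x
    rw [hq x]; ring
  rw [ge_iff_le, hq']
  rw [hLsplit] at hfinal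
  linarith
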